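/- Let (R_k) be a sequence of nonnegative reals satisfying R_{k+1} - R_k ≥ -2ηλ R_k - 2η²Λ D √(R_k) + η² D² for all k, with η, λ, Λ, D > 0, η < 1/(2λ), and η²ΛD/(1-2ηλ) ≤ z₀ where z₀ = (-2ηΛD + √(4η²Λ²D² + 8ηλD²))/(4λ). Then for every k ≥ 0, if R_k < z₀² then R_{k+1} > R_k. -/

import Mathlib

theorem stmt_1
    (η lam Λ D z₀ : ℝ) (R : ℕ → ℝ)
    (hη : 0 < η) (hlam : 0 < lam) (hΛ : 0 < Λ) (hD : 0 < D)
    (hη2 : η < 1 / (2 * lam))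
    (hz₀ : z₀ = (-2 * η * Λ * D + Real.sqrt (4 * η ^ 2 * Λ ^ 2 * D ^ 2 + 8 * η * lam * D ^ 2)) / (4 * lam))
    (hRnonneg : ∀ k, 0 ≤ R k)
    (hrec : ∀ k, R (k + 1) - R k ≥
      -2 * η * lam * R k - 2 * η ^ 2 * Λ * D * Real.sqrt (R k) + η ^ 2 * D ^ 2)
    (hsmall : η ^ 2 * Λ * D / (1 - 2 * η * lam) ≤ z₀) :
    ∀ k, R k < z₀ ^ 2 → R (k + 1) > R k := by
  intro k hk
  set disc := 4 * η ^ 2 * Λ ^ 2 * D ^ 2 + 8 * η * lam * D ^ 2 with hdisc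
  have hdiscpos : 0 < disc := by positivity
  have hsqnn : 0 ≤ Real.sqrt disc := Real.sqrt_nonneg _
  have hsq : Real.sqrt disc ^ 2 = disc := Real.sq_sqrt hdiscpos.le
  have hsd : Real.sqrt disc = 4 * lam * z₀ + 2 * η * Λ * D := by
    rw [hz₀]; field_simp; ring
  -- key identity: 2 λ z₀² + 2 η Λ D z₀ = η D²
  have hkey : 2 * lam * z₀ ^ 2 + 2 * η * Λ * D * z₀ = η * D ^ 2 := by
    have := hsq
    rw [hsd] at this
    nlinarith [this]
  -- z₀ > 0
  have hz₀pos : 0 < z₀ := by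
    have h1 : 2 * η * Λ * D < Real.sqrt disc := by
      rw [show 2 * η * Λ * D = Real.sqrt ((2 * η * Λ * D) ^ 2) from
        (Real.sqrt_sq (by positivity)).symm]
      exact Real.sqrt_lt_sqrt (by positivity) (by rw [hdisc]; nlinarith [mul_pos (mul_pos hη hlam) (pow_pos hD 2)])
    rw [hz₀]
    have : 0 < -2 * η * Λ * D + Real.sqrt disc := by linarith
    positivity
  have hs0 : 0 ≤ Real.sqrt (R k) := Real.sqrt_nonneg _
  have hs2 : Real.sqrt (R k) ^ 2 = R k := Real.sq_sqrt (hRnonneg k)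
  have hsz : Real.sqrt (R k) < z₀ := by
    have := (Real.sqrt_lt' hz₀pos).mpr hk
    exact this
  have h := hrec k
  have hkeyη : 2 * η * lam * z₀ ^ 2 + 2 * η ^ 2 * Λ * D * z₀ = η ^ 2 * D ^ 2 := by
    linear_combination η * hkey
  have hp1 : 0 < η * lam * ((z₀ - Real.sqrt (R k)) * (z₀ + Real.sqrt (R k))) :=
    mul_pos (mul_pos hη hlam) (mul_pos (by linarith) (by linarith))
  have hp2 : 0 < η ^ 2 * Λ * D * (z₀ - Real.sqrt (R k)) := by
    have : (0:ℝ) < z₀ - Real.sqrt (R k) := by linarith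
    positivity
  have hpos : 0 < -2 * η * lam * R k - 2 * η ^ 2 * Λ * D * Real.sqrt (R k) + η ^ 2 * D ^ 2 := by
    nlinarith [hp1, hp2, hkeyη, hs2]
  linarith
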